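/- Let (X,0) be a pointed convex Boolean metric space over a Boolean ring B and x,y ∈ X. The following are equivalent: (1) x ⋆ y = 0; (2) Bx ∩ By = {0}; (3) d(x,y) = |x| ∨ |y|. -/
import Mathlib


/-- The order on a Boolean ring: `a ≤ b` iff `a * b = a`. -/
def ble {B : Type} [BooleanRing B] (a b : B) : Prop := a * b = a

/-- The join on a Boolean ring: `a ∨ b = a + b + a * b`. -/
def bjoin {B : Type} [BooleanRing B] (a b : B) : B := a + b + a * b

/-- A Boolean metric space over a Boolean ring `B`: `d x y = 0` iff `x = y`,
`d` is symmetric, and `d x z ≤ d x y ∨ d y z`. -/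
structure BooleanMetric (B : Type) [BooleanRing B] (X : Type) where
  d : X → X → B
  d_eq_zero : ∀ x y, d x y = 0 ↔ x = y
  d_symm : ∀ x y, d x y = d y x
  d_tri : ∀ x y z, ble (d x z) (bjoin (d x y) (d y z))

/-- The coefficients `a i` have pairwise zero products. -/
def PairwiseOrthCoeffs {B : Type} [BooleanRing B] {k : ℕ} (a : Fin k → B) : Prop :=
  ∀ i j, i ≠ j → a i * a j = 0

/-- `x` is a convex combination of `x₁, …, xₖ` with coefficients `a₁, …, aₖ`,
i.e. `aᵢ · d(x, xᵢ) = 0` for all `i`. -/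
def IsConvComb {B X : Type} [BooleanRing B] (m : BooleanMetric B X) {k : ℕ}
    (a : Fin k → B) (xs : Fin k → X) (x : X) : Prop :=
  ∀ i, a i * m.d x (xs i) = 0

/-- A subset `S` is convex: every convex combination of points of `S` (with pairwise
disjoint coefficients summing to `1`) exists in `S`. -/
def IsConvexSubspace {B X : Type} [BooleanRing B] (m : BooleanMetric B X) (S : Set X) : Prop :=
  ∀ (k : ℕ) (a : Fin k → B) (xs : Fin k → X), (∀ i, xs i ∈ S) →
    PairwiseOrthCoeffs a → (∑ i, a i) = 1 → ∃ x ∈ S, IsConvComb m a xs x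

/-- A subset `S` is a CFG-space: it is convex and there are finitely many points of `S`
of which every point of `S` is a convex combination. -/
def IsCFGSubspace {B X : Type} [BooleanRing B] (m : BooleanMetric B X) (S : Set X) : Prop :=
  IsConvexSubspace m S ∧
  ∃ (k : ℕ) (xs : Fin k → X), (∀ i, xs i ∈ S) ∧
    ∀ x ∈ S, ∃ a : Fin k → B, PairwiseOrthCoeffs a ∧ (∑ i, a i) = 1 ∧ IsConvComb m a xs x

/-- A contractive map: `d(f x, f y) ≤ d(x, y)`. -/
def Contractive {B X Y : Type} [BooleanRing B] (mX : BooleanMetric B X) (mY : BooleanMetric B Y)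
    (f : X → Y) : Prop :=
  ∀ x y, ble (mY.d (f x) (f y)) (mX.d x y)

/-- `sm a x` is the convex combination `a x + (a+1) 0` of `x` and the base point `z`
with coefficients `a` and `a + 1`. -/
def IsScalarMul {B X : Type} [BooleanRing B] (m : BooleanMetric B X) (z : X)
    (sm : B → X → X) : Prop :=
  ∀ a x, a * m.d (sm a x) x = 0 ∧ (a + 1) * m.d (sm a x) z = 0

/-- `x ⊥ y`, i.e. `x ⋆ y = (d(x,y)+1) x = 0`. -/
def Orth {B X : Type} [BooleanRing B] (m : BooleanMetric B X) (z : X) (sm : B → X → X)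
    (x y : X) : Prop :=
  sm (m.d x y + 1) x = z

/-- `x` is the convex combination of `0, x₁, …, xₖ` with coefficients
`a₀ = 1 + a₁ + ⋯ + aₖ, a₁, …, aₖ`. -/
def ConvCombWithZero {B X : Type} [BooleanRing B] (m : BooleanMetric B X) (z : X) {k : ℕ}
    (a : Fin k → B) (xs : Fin k → X) (x : X) : Prop :=
  PairwiseOrthCoeffs a ∧ (∀ i, a i * m.d x (xs i) = 0) ∧ (1 + ∑ i, a i) * m.d x z = 0

/-- `x₁, …, xₖ` is a referential of `(X, z)`: the `xᵢ` are nonzero, pairwise orthogonal,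
and every point of `X` is a convex combination of `0, x₁, …, xₖ`. -/
def IsReferential {B X : Type} [BooleanRing B] (m : BooleanMetric B X) (z : X)
    (sm : B → X → X) {k : ℕ} (xs : Fin k → X) : Prop :=
  (∀ i, xs i ≠ z) ∧ (∀ i j, i ≠ j → Orth m z sm (xs i) (xs j)) ∧
  ∀ x : X, ∃ a : Fin k → B, ConvCombWithZero m z a xs x

/-- The whole space is a convex closure of the subset `S`: it is convex and every point
is a convex combination of points of `S`. -/
def IsConvexClosure {B X : Type} [BooleanRing B] (m : BooleanMetric B X) (S : Set X) : Prop :=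
  IsConvexSubspace m Set.univ ∧
  ∀ x : X, ∃ (k : ℕ) (a : Fin k → B) (xs : Fin k → X),
    (∀ i, xs i ∈ S) ∧ PairwiseOrthCoeffs a ∧ (∑ i, a i) = 1 ∧ IsConvComb m a xs x

/-- A finite set `R` is a referential of `(X, z)` (set version). -/
def IsReferentialSet {B X : Type} [BooleanRing B] (m : BooleanMetric B X) (z : X)
    (sm : B → X → X) (R : Finset X) : Prop :=
  z ∉ R ∧ (∀ x ∈ R, ∀ y ∈ R, x ≠ y → Orth m z sm x y) ∧
  ∀ u : X, ∃ a : X → B,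
    (∀ x ∈ R, ∀ y ∈ R, x ≠ y → a x * a y = 0) ∧
    (∀ x ∈ R, a x * m.d u x = 0) ∧ (1 + ∑ x ∈ R, a x) * m.d u z = 0


section Helpers

variable {B X : Type} [BooleanRing B]

private lemma bool_add_self (a : B) : a + a = 0 := BooleanRing.add_self a
private lemma bool_mul_self (a : B) : a * a = a := BooleanRing.mul_self a

/-- Uniqueness of scalar multiples. -/
private lemma sm_unique (m : BooleanMetric B X) (z : X) (sm : B → X → X)
    (hsm : IsScalarMul m z sm) (a : B) (x u : X)
    (h1 : a * m.d u x = 0) (h2 : (a + 1) * m.d u z = 0) : u = sm a x := by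
  obtain ⟨g1, g2⟩ := hsm a x
  set v := sm a x with hv
  have hq : a * m.d x v = 0 := by rw [m.d_symm]; exact g1
  have hq2 : (a + 1) * m.d z v = 0 := by rw [m.d_symm]; exact g2
  have T1 : m.d u v * (m.d u x + m.d x v + m.d u x * m.d x v) = m.d u v := m.d_tri u x v
  have T2 : m.d u v * (m.d u z + m.d z v + m.d u z * m.d z v) = m.d u v := m.d_tri u z v
  have e1 : a * m.d u v = 0 := by
    linear_combination (-a) * T1 + (m.d u v + m.d u v * m.d x v) * h1 + m.d u v * hq
  have e2 : (a + 1) * m.d u v = 0 := by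
    linear_combination (-(a+1)) * T2 + (m.d u v + m.d u v * m.d z v) * h2 + m.d u v * hq2
  have ht : m.d u v = 0 := by
    linear_combination e1 + e2 - bool_add_self (a * m.d u v)
  exact (m.d_eq_zero u v).mp ht

private lemma zero_smul_eq (m : BooleanMetric B X) (z : X) (sm : B → X → X)
    (hsm : IsScalarMul m z sm) (x : X) : z = sm (0 : B) x := by
  have hz : m.d z z = 0 := (m.d_eq_zero z z).mpr rfl
  exact sm_unique m z sm hsm 0 x z (by ring) (by rw [hz]; ring)

end Helpers

/-- In a pointed convex Boolean metric space, for `x, y`, the following are equivalent: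
(1) `x ⋆ y = 0`; (2) `Bx ∩ By = {0}`; (3) `d(x,y) = |x| ∨ |y|`. -/
theorem stmt7 {B X : Type} [BooleanRing B] (m : BooleanMetric B X)
    (hconv : IsConvexSubspace m Set.univ) (z : X)
    (sm : B → X → X) (hsm : IsScalarMul m z sm) (x y : X) :
    (sm (m.d x y + 1) x = z ↔
      {u : X | ∃ a : B, u = sm a x} ∩ {u : X | ∃ a : B, u = sm a y} = {z}) ∧
    (sm (m.d x y + 1) x = z ↔ m.d x y = bjoin (m.d z x) (m.d z y)) := by
  set e := m.d x y with he_def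
  set p := m.d z x with hp_def
  set q := m.d z y with hq_def
  -- Step A: sm (e+1) x = z ↔ (e+1) * p = 0
  have stepA : sm (e + 1) x = z ↔ (e + 1) * p = 0 := by
    constructor
    · intro h1
      have := (hsm (e + 1) x).1
      rw [h1, ← hp_def] at this
      exact this
    · intro hpe
      have hz : m.d z z = 0 := (m.d_eq_zero z z).mpr rfl
      have h1 : (e + 1) * m.d z x = 0 := hpe
      exact (sm_unique m z sm hsm (e + 1) x z h1 (by rw [hz]; ring)).symm
  constructor
  · -- (1) ↔ (2)
    constructor
    · intro h1
      have hpe : (e + 1) * p = 0 := stepA.mp h1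
      ext u
      simp only [Set.mem_inter_iff, Set.mem_setOf_eq, Set.mem_singleton_iff]
      constructor
      · rintro ⟨⟨a, ha⟩, ⟨b, hb⟩⟩
        obtain ⟨ga1, ga2⟩ := hsm a x
        obtain ⟨gb1, gb2⟩ := hsm b y
        rw [← ha] at ga1 ga2
        rw [← hb] at gb1 gb2
        set s := m.d u z with hs_def
        set r := m.d u x with hr_def
        set w := m.d u y with hw_def
        have T1 : e * (m.d x u + w + m.d x u * w) = e := m.d_tri x u y
        rw [m.d_symm x u, ← hr_def] at T1
        have T2 : s * (r + m.d x z + r * m.d x z) = s := m.d_tri u x z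
        rw [m.d_symm x z, ← hp_def] at T2
        have h3 : a * b * e = 0 := by
          linear_combination (-(a*b)) * T1 + (b*e + b*e*w) * ga1 + (a*e) * gb1
        have h4 : s = a * s := by linear_combination ga2 - bool_add_self (a * s)
        have h4b : s = b * s := by linear_combination gb2 - bool_add_self (b * s)
        have h5 : a * s = a * s * p := by
          linear_combination (-a) * T2 + (s + s * p) * ga1
        have h6 : s = s * p := by
          rw [h4]; linear_combination h5
        have h7 : s = s * e := by
          linear_combination (1 + e) * h6 + s * hpe - bool_add_self (s * e)
        have hs0 : s = 0 := by
          linear_combination h4 + a * h4b + a * b * h7 + s * h3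
        exact (m.d_eq_zero u z).mp hs0
      · intro hu
        rw [hu]
        exact ⟨⟨0, zero_smul_eq m z sm hsm x⟩, ⟨0, zero_smul_eq m z sm hsm y⟩⟩
    · intro hset
      set c := (e + 1) * p with hc_def
      obtain ⟨g1, g2⟩ := hsm c x
      set u := sm c x with hu_def
      have hce : c * e = 0 := by
        linear_combination p * bool_mul_self e + bool_add_self (p * e)
      have hcy : c * m.d u y = 0 := by
        have T : m.d u y * (m.d u x + e + m.d u x * e) = m.d u y := m.d_tri u x y
        linear_combination (-c) * T + (m.d u y + m.d u y * e) * g1 + m.d u y * hce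
      have huy : u = sm c y := sm_unique m z sm hsm c y u hcy g2
      have humem : u ∈ ({u : X | ∃ a : B, u = sm a x} ∩ {u : X | ∃ a : B, u = sm a y}) :=
        ⟨⟨c, hu_def⟩, ⟨c, huy⟩⟩
      rw [hset] at humem
      have huz : u = z := humem
      rw [huz] at g1
      have hcp : c * p = 0 := by rw [hp_def]; exact g1
      have hc0 : (e + 1) * p = 0 := by
        linear_combination hcp - (e + 1) * bool_mul_self p
      exact stepA.mpr hc0
  · -- (1) ↔ (3)
    rw [stepA]
    show (e + 1) * p = 0 ↔ e = bjoin p q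
    unfold bjoin
    constructor
    · intro hpe
      have hq : q * (p + e + p * e) = q := m.d_tri z x y
      have he : e * (m.d x z + q + m.d x z * q) = e := m.d_tri x z y
      rw [m.d_symm x z, ← hp_def] at he
      have b1 : p * e = p := by
        linear_combination bool_add_self (p * e) - hpe
      have b2 : q * e = q := by
        linear_combination hq - q * b1 - bool_add_self (q * p)
      linear_combination (1 + q) * b1 + b2 - he
    · intro heq
      linear_combination p * heq + (1 + q) * bool_mul_self p + bool_add_self p
        + bool_add_self (p * q)
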